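/- In the weak semantics of the Petri calculus: (i) if P;R ⇒α/β Q then there exist terms P', R' and a label γ such that Q = P';R', P ⇒α/γ P' and R ⇒γ/β R'; (ii) if P⊗R ⇒α/β Q then there exist terms P', R' such that Q = P'⊗R', P ⇒α₁/β₁ P' and R ⇒α₂/β₂ R' with α = α₁α₂ and β = β₁β₂ (concatenation of words). -/

import Mathlib

/-- Syntax of the Petri calculus. -/
inductive PTerm : Type
  | empty               -- ○ (empty one-place buffer)
  | full                -- ● (full one-place buffer)
  | iden                -- I
  | tw                  -- X
  | diag                -- Δ
  | codiag              -- ∇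
  | bot                 -- ⊥
  | top                 -- ⊤
  | lam                 -- Λ
  | vee                 -- V
  | down                -- ↓
  | up                  -- ↑
  | tens (P Q : PTerm)  -- ⊗
  | seq (P Q : PTerm)   -- ;
  deriving DecidableEq

namespace PTerm

/-- Sorting discipline of the Petri calculus. -/
inductive HasSort : PTerm → ℕ → ℕ → Prop
  | empty : HasSort .empty 1 1
  | full : HasSort .full 1 1
  | iden : HasSort .iden 1 1
  | tw : HasSort .tw 2 2
  | diag : HasSort .diag 1 2
  | codiag : HasSort .codiag 2 1
  | bot : HasSort .bot 1 0
  | top : HasSort .top 0 1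
  | lam : HasSort .lam 1 2
  | vee : HasSort .vee 2 1
  | down : HasSort .down 1 0
  | up : HasSort .up 0 1
  | tens {P Q : PTerm} {k l m n : ℕ} :
      HasSort P k l → HasSort Q m n → HasSort (.tens P Q) (k + m) (l + n)
  | seq {P Q : PTerm} {k n l : ℕ} :
      HasSort P k n → HasSort Q n l → HasSort (.seq P Q) k l

/-- Basic connectors are the constants of the calculus. -/
def IsBasic : PTerm → Prop
  | .tens _ _ => False
  | .seq _ _ => False
  | _ => True

/-- Stateless terms contain no buffers ○, ●. -/
def Stateless : PTerm → Prop
  | .empty => False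
  | .full => False
  | .tens P Q => Stateless P ∧ Stateless Q
  | .seq P Q => Stateless P ∧ Stateless Q
  | _ => True

/-- Strong operational semantics of the Petri calculus.  Labels are words
over ℕ (the rules only produce entries in {0,1}). -/
inductive Step : PTerm → List ℕ → List ℕ → PTerm → Prop
  | tkI : Step .empty [1] [0] .full
  | tkO : Step .full [0] [1] .empty
  | iden : Step .iden [1] [1] .iden
  | tw {a b : ℕ} : a ≤ 1 → b ≤ 1 → Step .tw [a, b] [b, a] .tw
  | bot : Step .bot [1] [] .bot
  | top : Step .top [] [1] .top
  | diag : Step .diag [1] [1, 1] .diag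
  | codiag : Step .codiag [1, 1] [1] .codiag
  | lam {a : ℕ} : a ≤ 1 → Step .lam [1] [1 - a, a] .lam
  | vee {a : ℕ} : a ≤ 1 → Step .vee [1 - a, a] [1] .vee
  | refl {C : PTerm} {k l : ℕ} : IsBasic C → HasSort C k l →
      Step C (List.replicate k 0) (List.replicate l 0) C
  | cut {P Q R S : PTerm} {α β γ : List ℕ} :
      Step P α γ Q → Step R γ β S → Step (.seq P R) α β (.seq Q S)
  | ten {P Q R S : PTerm} {α₁ α₂ β₁ β₂ : List ℕ} :
      Step P α₁ β₁ Q → Step R α₂ β₂ S →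
      Step (.tens P R) (α₁ ++ α₂) (β₁ ++ β₂) (.tens Q S)

/-- Weak operational semantics of the Petri calculus: the same rules plus the
rule (Weak) composing consecutive steps by pointwise addition of labels. -/
inductive Weak : PTerm → List ℕ → List ℕ → PTerm → Prop
  | tkI : Weak .empty [1] [0] .full
  | tkO : Weak .full [0] [1] .empty
  | iden : Weak .iden [1] [1] .iden
  | tw {a b : ℕ} : a ≤ 1 → b ≤ 1 → Weak .tw [a, b] [b, a] .tw
  | bot : Weak .bot [1] [] .bot
  | top : Weak .top [] [1] .top
  | diag : Weak .diag [1] [1, 1] .diag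
  | codiag : Weak .codiag [1, 1] [1] .codiag
  | lam {a : ℕ} : a ≤ 1 → Weak .lam [1] [1 - a, a] .lam
  | vee {a : ℕ} : a ≤ 1 → Weak .vee [1 - a, a] [1] .vee
  | refl {C : PTerm} {k l : ℕ} : IsBasic C → HasSort C k l →
      Weak C (List.replicate k 0) (List.replicate l 0) C
  | cut {P Q R S : PTerm} {α β γ : List ℕ} :
      Weak P α γ Q → Weak R γ β S → Weak (.seq P R) α β (.seq Q S)
  | ten {P Q R S : PTerm} {α₁ α₂ β₁ β₂ : List ℕ} :
      Weak P α₁ β₁ Q → Weak R α₂ β₂ S →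
      Weak (.tens P R) (α₁ ++ α₂) (β₁ ++ β₂) (.tens Q S)
  | weak {P R Q : PTerm} {α₁ α₂ β₁ β₂ : List ℕ} :
      Weak P α₁ β₁ R → Weak R α₂ β₂ Q →
      Weak P (List.zipWith (· + ·) α₁ α₂) (List.zipWith (· + ·) β₁ β₂) Q

/-- Input arity determined by the syntax. -/
def inAr : PTerm → ℕ
  | .top => 0
  | .up => 0
  | .tw => 2
  | .codiag => 2
  | .vee => 2
  | .tens P Q => inAr P + inAr Q
  | .seq P _ => inAr P
  | _ => 1

/-- Output arity determined by the syntax. -/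
def outAr : PTerm → ℕ
  | .bot => 0
  | .down => 0
  | .tw => 2
  | .diag => 2
  | .lam => 2
  | .tens P Q => outAr P + outAr Q
  | .seq _ Q => outAr Q
  | _ => 1

lemma basic_sort {C : PTerm} {k l : ℕ} (hb : IsBasic C) (hs : HasSort C k l) :
    k = inAr C ∧ l = outAr C := by
  cases hs <;> simp_all [IsBasic, inAr, outAr]

lemma weak_len {P : PTerm} {α β : List ℕ} {Q : PTerm} (h : Weak P α β Q) :
    α.length = inAr P ∧ β.length = outAr P ∧ inAr Q = inAr P ∧ outAr Q = outAr P := by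
  induction h with
  | refl hb hs =>
    obtain ⟨hk, hl⟩ := basic_sort hb hs
    simp [hk, hl]
  | cut h1 h2 ih1 ih2 =>
    exact ⟨by simp [inAr, ih1.1], by simp [outAr, ih2.2.1],
      by simp [inAr, ih1.2.2.1], by simp [outAr, ih2.2.2.2]⟩
  | ten h1 h2 ih1 ih2 =>
    simp [inAr, outAr, ih1.1, ih1.2.1, ih1.2.2, ih2.1, ih2.2.1, ih2.2.2]
  | weak h1 h2 ih1 ih2 =>
    refine ⟨?_, ?_, ?_, ?_⟩
    · simp [List.length_zipWith, ih1.1, ih2.1, ih1.2.2.1]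
    · simp [List.length_zipWith, ih1.2.1, ih2.2.1, ih1.2.2.2]
    · rw [ih2.2.2.1, ih1.2.2.1]
    · rw [ih2.2.2.2, ih1.2.2.2]
  | _ => simp [inAr, outAr]

lemma decomp {T : PTerm} {α β : List ℕ} {Q : PTerm} (h : Weak T α β Q) :
    (∀ P R, T = .seq P R → ∃ (P' R' : PTerm) (γ : List ℕ), Q = .seq P' R' ∧
       Weak P α γ P' ∧ Weak R γ β R') ∧
    (∀ P R, T = .tens P R → ∃ (P' R' : PTerm) (α₁ α₂ β₁ β₂ : List ℕ),
       Q = .tens P' R' ∧ Weak P α₁ β₁ P' ∧ Weak R α₂ β₂ R' ∧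
       α = α₁ ++ α₂ ∧ β = β₁ ++ β₂) := by
  induction h with
  | refl hb hs =>
    refine ⟨fun P R hE => ?_, fun P R hE => ?_⟩ <;> (subst hE; exact hb.elim)
  | cut h1 h2 ih1 ih2 =>
    refine ⟨fun P0 R0 hE => ?_, fun P0 R0 hE => ?_⟩
    · injection hE with e1 e2; subst e1; subst e2
      exact ⟨_, _, _, rfl, h1, h2⟩
    · simp at hE
  | ten h1 h2 ih1 ih2 =>
    refine ⟨fun P0 R0 hE => ?_, fun P0 R0 hE => ?_⟩
    · simp at hE
    · injection hE with e1 e2; subst e1; subst e2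
      exact ⟨_, _, _, _, _, _, rfl, h1, h2, rfl, rfl⟩
  | weak h1 h2 ih1 ih2 =>
    refine ⟨fun P0 R0 hE => ?_, fun P0 R0 hE => ?_⟩
    · subst hE
      obtain ⟨P₁, R₁, γ₁, hM, w1, w2⟩ := ih1.1 P0 R0 rfl
      obtain ⟨P', R', γ₂, hQ, w3, w4⟩ := ih2.1 P₁ R₁ hM
      exact ⟨P', R', List.zipWith (· + ·) γ₁ γ₂, hQ, Weak.weak w1 w3, Weak.weak w2 w4⟩
    · subst hE
      obtain ⟨P₁, R₁, a1, a2, b1, b2, hM, w1, w2, hα₁, hβ₁⟩ := ih1.2 P0 R0 rfl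
      obtain ⟨P', R', a1', a2', b1', b2', hQ, w3, w4, hα₂, hβ₂⟩ := ih2.2 P₁ R₁ hM
      have la : a1.length = a1'.length := by
        rw [(weak_len w1).1, (weak_len w3).1, (weak_len w1).2.2.1]
      have lb : b1.length = b1'.length := by
        rw [(weak_len w1).2.1, (weak_len w3).2.1, (weak_len w1).2.2.2]
      refine ⟨P', R', List.zipWith (· + ·) a1 a1', List.zipWith (· + ·) a2 a2',
        List.zipWith (· + ·) b1 b1', List.zipWith (· + ·) b2 b2', hQ,
        Weak.weak w1 w3, Weak.weak w2 w4, ?_, ?_⟩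
      · rw [hα₁, hα₂, List.zipWith_append la]
      · rw [hβ₁, hβ₂, List.zipWith_append lb]
  | _ => exact ⟨fun P R hE => by simp at hE, fun P R hE => by simp at hE⟩

end PTerm

/-- Lemma `syntaxdecomposition`: in the weak semantics of the
Petri calculus, transitions of sequential and parallel composites decompose
into transitions of the components. -/
theorem stmt9 :
    (∀ (P R : PTerm) (α β : List ℕ) (Q : PTerm),
       PTerm.Weak (.seq P R) α β Q →
       ∃ (P' R' : PTerm) (γ : List ℕ), Q = .seq P' R' ∧
         PTerm.Weak P α γ P' ∧ PTerm.Weak R γ β R') ∧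
    (∀ (P R : PTerm) (α β : List ℕ) (Q : PTerm),
       PTerm.Weak (.tens P R) α β Q →
       ∃ (P' R' : PTerm) (α₁ α₂ β₁ β₂ : List ℕ), Q = .tens P' R' ∧
         PTerm.Weak P α₁ β₁ P' ∧ PTerm.Weak R α₂ β₂ R' ∧
         α = α₁ ++ α₂ ∧ β = β₁ ++ β₂) :=
  ⟨fun P R α β Q h => (PTerm.decomp h).1 P R rfl,
   fun P R α β Q h => (PTerm.decomp h).2 P R rfl⟩
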